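/- For every real number z > -1, one has h(|z|) ≤ h(z). -/

import Mathlib

lemma entropy_deriv (x : ℝ) (h1 : (0:ℝ) < 1 - x) (h2 : (0:ℝ) < 1 + x) :
    HasDerivAt (fun x : ℝ => (1 - x) * Real.log (1 - x) + x
      - ((1 + x) * Real.log (1 + x) - x))
      (-(Real.log (1 - x)) - Real.log (1 + x)) x := by
  have hd1 : HasDerivAt (fun x : ℝ => (1 - x) * Real.log (1 - x))
      ((-1) * Real.log (1 - x) + (1 - x) * (-1 / (1 - x))) x := by
    have hu : HasDerivAt (fun x : ℝ => 1 - x) (-1) x := by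
      simpa using (hasDerivAt_id x).const_sub 1
    have hl : HasDerivAt (fun x : ℝ => Real.log (1 - x)) (-1 / (1 - x)) x := by
      have := (Real.hasDerivAt_log h1.ne').comp x hu
      simpa [Function.comp_def, div_eq_mul_inv, mul_comm] using this
    exact hu.mul hl
  have hd2 : HasDerivAt (fun x : ℝ => (1 + x) * Real.log (1 + x))
      (1 * Real.log (1 + x) + (1 + x) * (1 / (1 + x))) x := by
    have hu : HasDerivAt (fun x : ℝ => 1 + x) 1 x := by
      simpa using (hasDerivAt_id x).const_add 1
    have hl : HasDerivAt (fun x : ℝ => Real.log (1 + x)) (1 / (1 + x)) x := by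
      have := (Real.hasDerivAt_log h2.ne').comp x hu
      simpa [Function.comp_def, div_eq_mul_inv, mul_comm] using this
    exact hu.mul hl
  have hdF := (hd1.add (hasDerivAt_id x)).sub (hd2.sub (hasDerivAt_id x))
  have e1 : (1 - x) * (-1 / (1 - x)) = -1 := by field_simp
  have e2 : (1 + x) * (1 / (1 + x)) = 1 := by field_simp
  refine hdF.congr_deriv ?_
  rw [e1, e2]; ring

lemma entropy_aux (t : ℝ) (ht : 0 ≤ t) (ht1 : t < 1) :
    (1 + t) * Real.log (1 + t) - t ≤ (1 - t) * Real.log (1 - t) + t := by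
  set F : ℝ → ℝ := fun x => (1 - x) * Real.log (1 - x) + x
      - ((1 + x) * Real.log (1 + x) - x) with hF
  have hmono : MonotoneOn F (Set.Ico (0:ℝ) 1) := by
    apply monotoneOn_of_deriv_nonneg (convex_Ico 0 1)
    · apply ContinuousOn.sub
      · apply ContinuousOn.add
        · apply ContinuousOn.mul (by fun_prop)
          apply ContinuousOn.log (by fun_prop)
          intro x hx
          simp only [Set.mem_Ico] at hx
          nlinarith [hx.1, hx.2]
        · exact continuousOn_id
      · apply ContinuousOn.sub
        · apply ContinuousOn.mul (by fun_prop)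
          apply ContinuousOn.log (by fun_prop)
          intro x hx
          simp only [Set.mem_Ico] at hx
          nlinarith [hx.1, hx.2]
        · exact continuousOn_id
    · intro x hx
      rw [interior_Ico] at hx
      obtain ⟨hx0, hx1⟩ := hx
      exact ((entropy_deriv x (by linarith) (by linarith)).differentiableAt.differentiableWithinAt)
    · intro x hx
      rw [interior_Ico] at hx
      obtain ⟨hx0, hx1⟩ := hx
      have h1 : (0:ℝ) < 1 - x := by linarith
      have h2 : (0:ℝ) < 1 + x := by linarith
      rw [(entropy_deriv x h1 h2).deriv]
      have hlog : Real.log (1 - x) + Real.log (1 + x) ≤ 0 := by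
        rw [← Real.log_mul h1.ne' h2.ne']
        apply Real.log_nonpos (by nlinarith) (by nlinarith)
      linarith
  have h0 : (0:ℝ) ∈ Set.Ico (0:ℝ) 1 := ⟨le_refl 0, one_pos⟩
  have := hmono h0 ⟨ht, ht1⟩ ht
  simp only [hF, sub_zero, add_zero, Real.log_one, mul_zero, mul_one, sub_self] at this
  linarith

/-- For every real number `z > -1`, one has `h |z| ≤ h z`, where
`h z = (1+z) * log (1+z) - z`. -/
theorem entropy_function_abs_le (z : ℝ) (hz : -1 < z) :
    (1 + |z|) * Real.log (1 + |z|) - |z| ≤ (1 + z) * Real.log (1 + z) - z := by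
  rcases le_or_gt 0 z with h | h
  · rw [abs_of_nonneg h]
  · rw [abs_of_neg h]
    have := entropy_aux (-z) (by linarith) (by linarith)
    have e : (1:ℝ) - -z = 1 + z := by ring
    rw [e] at this
    linarith
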